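/- Let V be a right vector space over a division ring D, and suppose it is not the case that V is one-dimensional over D with D isomorphic to Z/2Z. Then every linear transformation of V is the sum of two invertible linear transformations. -/

import Mathlib

/-!
Every linear transformation of a right vector space `V` over a division ring `D`
(except when `V` is one-dimensional over `D ≅ ℤ/2ℤ`) is a sum of two invertible ones
(Zelinsky's theorem).
-/

open Module
open Fin.NatCast

section Master
variable {R V : Type*} [DivisionRing R] [AddCommGroup V] [Module R V]

theorem sum2units_master {I A : Type*} (T : Module.End R V)
    (b : Basis I R V) (e : Basis A R V)
    (y z : I → V) (w1 w2 : A → V)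
    (hsum : ∀ i, y i + z i = T (b i))
    (h11 : ∀ a, b.constr ℕ y (w1 a) = e a)
    (h12 : ∀ i, e.constr ℕ w1 (y i) = b i)
    (h21 : ∀ a, b.constr ℕ z (w2 a) = e a)
    (h22 : ∀ i, e.constr ℕ w2 (z i) = b i) :
    ∃ S₁ S₂ : Module.End R V, IsUnit S₁ ∧ IsUnit S₂ ∧ T = S₁ + S₂ := by
  refine ⟨b.constr ℕ y, b.constr ℕ z, ?_, ?_, ?_⟩
  · refine isUnit_iff_exists.mpr ⟨e.constr ℕ w1, ?_, ?_⟩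
    · exact e.ext fun a => by
        simp only [Module.End.mul_apply, Basis.constr_basis, Module.End.one_apply, h11]
    · exact b.ext fun i => by
        simp only [Module.End.mul_apply, Basis.constr_basis, Module.End.one_apply, h12]
  · refine isUnit_iff_exists.mpr ⟨e.constr ℕ w2, ?_, ?_⟩
    · exact e.ext fun a => by
        simp only [Module.End.mul_apply, Basis.constr_basis, Module.End.one_apply, h21]
    · exact b.ext fun i => by
        simp only [Module.End.mul_apply, Basis.constr_basis, Module.End.one_apply, h22]
  · exact (b.ext fun i => by
      simp only [LinearMap.add_apply, Basis.constr_basis, hsum]).symm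

theorem sum2units_rank1 (T : Module.End R V) (b e : Basis (Fin 1) R V)
    (ht : T (b 0) = e 0) (c : R) (hc0 : c ≠ 0) (hc1 : 1 - c ≠ 0) :
    ∃ S₁ S₂ : Module.End R V, IsUnit S₁ ∧ IsUnit S₂ ∧ T = S₁ + S₂ := by
  apply sum2units_master T b e (fun _ => c • e 0) (fun _ => (1 - c) • e 0)
      (fun _ => c⁻¹ • b 0) (fun _ => (1 - c)⁻¹ • b 0)
  · intro i
    rw [Fin.eq_zero i, ht, ← add_smul]
    simp
  · intro a
    rw [Fin.eq_zero a, map_smul, Basis.constr_basis, smul_smul, inv_mul_cancel₀ hc0, one_smul]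
  · intro i
    rw [Fin.eq_zero i, map_smul, Basis.constr_basis, smul_smul, mul_inv_cancel₀ hc0, one_smul]
  · intro a
    rw [Fin.eq_zero a, map_smul, Basis.constr_basis, smul_smul, inv_mul_cancel₀ hc1, one_smul]
  · intro i
    rw [Fin.eq_zero i, map_smul, Basis.constr_basis, smul_smul, mul_inv_cancel₀ hc1, one_smul]

end Master

section FinCase
variable {R V : Type*} [DivisionRing R] [AddCommGroup V] [Module R V]

/-- Auxiliary alternating sums for the cyclic construction. -/
noncomputable def sum2unitsAux {m : ℕ} (b : Basis (Fin (m+1)) R V) : ℕ → V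
  | 0 => b (Fin.last m)
  | (i+1) => b (i : Fin (m+1)) - sum2unitsAux b i

theorem sum2units_staircase {m : ℕ} (hm : 1 ≤ m) (T : Module.End R V)
    (b e : Basis (Fin (m+1)) R V) (ht : ∀ k, T (b k) = e k) :
    ∃ S₁ S₂ : Module.End R V, IsUnit S₁ ∧ IsUnit S₂ ∧ T = S₁ + S₂ := by
  have hlast : ∀ k : Fin (m+1), ¬ (k < Fin.last m) → k = Fin.last m := by
    intro k hk
    have h1 := k.isLt
    rw [Fin.lt_def, Fin.val_last] at hk
    exact Fin.ext (by rw [Fin.val_last]; omega)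
  have hlastne : (Fin.last m) ≠ 0 := by
    intro hc
    have := congrArg Fin.val hc
    rw [Fin.val_last] at this
    simp at this
    omega
  have hsub : ∀ a : Fin (m+1), a ≠ 0 → ((a - 1 : Fin (m+1)) : ℕ) = (a : ℕ) - 1 := by
    intro a ha
    rw [Fin.coe_sub_one, if_neg ha]
  apply sum2units_master T b e
    (fun k => if k < Fin.last m then e (k+1) else e 0 + e k)
    (fun k => if k < Fin.last m then e k - e (k+1) else -e 0)
    (fun a => if a = 0 then b (Fin.last m) - b (Fin.last m - 1) else b (a - 1))
    (fun a => -b (Fin.last m) - ∑ i ∈ Finset.range (a : ℕ), b (i : Fin (m+1)))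
  · intro k
    by_cases h : k < Fin.last m <;> simp only [if_pos, if_neg, h, if_true, if_false, ht] <;> abel
  · intro a
    by_cases h : a = 0
    · rw [if_pos h, map_sub, Basis.constr_basis, Basis.constr_basis]
      rw [if_neg (lt_irrefl _), if_pos (by rw [Fin.lt_def, hsub _ hlastne, Fin.val_last]; omega)]
      rw [sub_add_cancel, h]
      abel
    · rw [if_neg h, Basis.constr_basis]
      have ha1 : a - 1 < Fin.last m := by
        rw [Fin.lt_def, hsub _ h, Fin.val_last]
        have h1 := a.isLt
        have h2 : (a : ℕ) ≠ 0 := fun hc => h (Fin.ext (by simpa using hc))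
        omega
      rw [if_pos ha1, sub_add_cancel]
  · intro k
    by_cases h : k < Fin.last m
    · rw [if_pos h, Basis.constr_basis]
      have : k + 1 ≠ 0 := by
        intro hc
        have := congrArg Fin.val hc
        rw [Fin.val_add_one_of_lt h] at this
        simp at this
      rw [if_neg this, add_sub_cancel_right]
    · rw [if_neg h, map_add, Basis.constr_basis, Basis.constr_basis, if_pos rfl,
        if_neg (by rw [hlast k h]; exact hlastne), hlast k h]
      abel
  · intro a
    simp only [map_sub, map_neg, map_sum, Basis.constr_basis]
    rw [if_neg (lt_irrefl _)]
    have hz : ∀ i ∈ Finset.range (a : ℕ),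
        (if (i : Fin (m+1)) < Fin.last m then e (i : Fin (m+1)) - e ((i : Fin (m+1))+1)
          else -e 0)
        = e ((i : ℕ) : Fin (m+1)) - e ((i + 1 : ℕ) : Fin (m+1)) := by
      intro i hi
      have hia : i < (a : ℕ) := Finset.mem_range.mp hi
      have han := a.isLt
      have h1 : i < m := by omega
      have hv1 : ((i : Fin (m+1)) : ℕ) = i := Fin.val_cast_of_lt (by omega)
      have hfl : (i : Fin (m+1)) < Fin.last m := by rw [Fin.lt_def, hv1, Fin.val_last]; omega
      rw [if_pos hfl]
      have hss : (i : Fin (m+1)) + 1 = ((i + 1 : ℕ) : Fin (m+1)) := by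
        refine Fin.ext ?_
        rw [Fin.val_add_one_of_lt hfl, hv1, Fin.val_cast_of_lt (by omega)]
      rw [hss]
    rw [Finset.sum_congr rfl hz, Finset.sum_range_sub' (fun i => e ((i : ℕ) : Fin (m+1)))]
    rw [Nat.cast_zero, Fin.cast_val_eq_self]
    abel
  · intro k
    by_cases h : k < Fin.last m
    · rw [if_pos h, map_sub, Basis.constr_basis, Basis.constr_basis]
      rw [Fin.val_add_one_of_lt h, Finset.sum_range_succ, Fin.cast_val_eq_self]
      abel
    · rw [if_neg h, map_neg, Basis.constr_basis, hlast k h]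
      rw [Fin.val_zero, Finset.sum_range_zero]
      abel

theorem sum2units_cyclic {m r : ℕ} (hr : r < m + 1) (T : Module.End R V)
    (b e : Basis (Fin (m+1)) R V)
    (ht : ∀ k : Fin (m+1), T (b k) = if (k : ℕ) < r then e k else 0) :
    ∃ S₁ S₂ : Module.End R V, IsUnit S₁ ∧ IsUnit S₂ ∧ T = S₁ + S₂ := by
  have hsub : ∀ a : Fin (m+1), a ≠ 0 → ((a - 1 : Fin (m+1)) : ℕ) = (a : ℕ) - 1 := by
    intro a ha
    rw [Fin.coe_sub_one, if_neg ha]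
  have hvne : ∀ a : Fin (m+1), (a : ℕ) ≠ 0 → a ≠ 0 := by
    intro a ha hc
    exact ha (by rw [hc]; rfl)
  apply sum2units_master T b e
    (fun k => if (k : ℕ) < r then e k + e (k+1) else e (k+1))
    (fun k => -e (k+1))
    (fun a => if (a : ℕ) ≤ r then sum2unitsAux b (a : ℕ) else b (a - 1))
    (fun a => -b (a - 1))
  · intro k
    by_cases h : (k : ℕ) < r <;> simp only [ht, if_pos, if_neg, h, if_true, if_false] <;> abel
  · intro a
    by_cases h : (a : ℕ) ≤ r
    · rw [if_pos h]
      have key : ∀ t : ℕ, t ≤ r →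
          (b.constr ℕ (fun k => if (k : ℕ) < r then e k + e (k+1) else e (k+1)))
            (sum2unitsAux b t) = e ((t : ℕ) : Fin (m+1)) := by
        intro t htr
        induction t with
        | zero =>
          rw [sum2unitsAux, Basis.constr_basis, if_neg (by rw [Fin.val_last]; omega)]
          rw [Fin.last_add_one, Nat.cast_zero]
        | succ i ih =>
          have hir : i ≤ r := by omega
          have him : i < m + 1 := by omega
          rw [sum2unitsAux, map_sub, Basis.constr_basis, ih hir]
          have hvi : ((i : Fin (m+1)) : ℕ) = i := Fin.val_cast_of_lt him
          rw [if_pos (by rw [hvi]; omega)]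
          have hss : (i : Fin (m+1)) + 1 = ((i + 1 : ℕ) : Fin (m+1)) := by
            refine Fin.ext ?_
            rw [Fin.val_add_one_of_lt (by rw [Fin.lt_def, hvi, Fin.val_last]; omega), hvi,
              Fin.val_cast_of_lt (by omega)]
          rw [hss]
          abel
      rw [key (a : ℕ) h, Fin.cast_val_eq_self]
    · rw [if_neg h, Basis.constr_basis]
      have ha0 : a ≠ 0 := hvne a (by omega)
      rw [if_neg (by rw [hsub a ha0]; omega), sub_add_cancel]
  · intro k
    by_cases h : (k : ℕ) < r
    · rw [if_pos h, map_add, Basis.constr_basis, Basis.constr_basis]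
      have hklt : k < Fin.last m := by rw [Fin.lt_def, Fin.val_last]; omega
      have hv1 : ((k + 1 : Fin (m+1)) : ℕ) = (k : ℕ) + 1 := Fin.val_add_one_of_lt hklt
      rw [if_pos (by omega : (k : ℕ) ≤ r), if_pos (by rw [hv1]; omega), hv1]
      rw [sum2unitsAux, Fin.cast_val_eq_self]
      abel
    · by_cases h2 : k < Fin.last m
      · rw [if_neg h, Basis.constr_basis]
        have hv1 : ((k + 1 : Fin (m+1)) : ℕ) = (k : ℕ) + 1 := Fin.val_add_one_of_lt h2
        rw [if_neg (by rw [hv1]; omega), add_sub_cancel_right]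
      · have hk : k = Fin.last m := by
          have h1 := k.isLt
          rw [Fin.lt_def, Fin.val_last] at h2
          exact Fin.ext (by rw [Fin.val_last]; omega)
        rw [if_neg h, Basis.constr_basis, hk, Fin.last_add_one]
        rw [if_pos (by rw [Fin.val_zero]; omega), Fin.val_zero, sum2unitsAux]
  · intro a
    rw [map_neg, Basis.constr_basis, neg_neg, sub_add_cancel]
  · intro k
    rw [map_neg, Basis.constr_basis, neg_neg, add_sub_cancel_right]
end FinCase

section A2
variable {R V : Type*} [DivisionRing R] [AddCommGroup V] [Module R V]

theorem sum2units_A2 {J L M L' M' : Type*} (T : Module.End R V)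
    (b : Basis (J ⊕ L) R V) (e : Basis (J ⊕ M) R V)
    (φL : L ≃ J ⊕ L') (φM : M ≃ J ⊕ M') (σ : L' ≃ M')
    (htj : ∀ j, T (b (Sum.inl j)) = e (Sum.inl j))
    (htl : ∀ l, T (b (Sum.inr l)) = 0) :
    ∃ S₁ S₂ : Module.End R V, IsUnit S₁ ∧ IsUnit S₂ ∧ T = S₁ + S₂ := by
  classical
  apply sum2units_master T b e
    (Sum.elim (fun j => e (Sum.inr (φM.symm (Sum.inl j))))
      (fun l => Sum.elim (fun j => e (Sum.inl j))
        (fun l' => e (Sum.inr (φM.symm (Sum.inr (σ l'))))) (φL l)))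
    (Sum.elim (fun j => e (Sum.inl j) - e (Sum.inr (φM.symm (Sum.inl j))))
      (fun l => Sum.elim (fun j => -e (Sum.inl j))
        (fun l' => -e (Sum.inr (φM.symm (Sum.inr (σ l'))))) (φL l)))
    (Sum.elim (fun j => b (Sum.inr (φL.symm (Sum.inl j))))
      (fun m => Sum.elim (fun j => b (Sum.inl j))
        (fun m' => b (Sum.inr (φL.symm (Sum.inr (σ.symm m'))))) (φM m)))
    (Sum.elim (fun j => -b (Sum.inr (φL.symm (Sum.inl j))))
      (fun m => Sum.elim (fun j => -b (Sum.inr (φL.symm (Sum.inl j))) - b (Sum.inl j))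
        (fun m' => -b (Sum.inr (φL.symm (Sum.inr (σ.symm m'))))) (φM m)))
  · rintro (j | l)
    · simp [htj]
    · rcases hx : φL l with j | l' <;> simp [hx, htl]
  · rintro (j | m)
    · simp [Equiv.apply_symm_apply]
    · rcases hx : φM m with j | m'
      · simp only [Sum.elim_inl, Sum.elim_inr, hx, Basis.constr_basis]
        rw [← hx, Equiv.symm_apply_apply]
      · simp only [Sum.elim_inl, Sum.elim_inr, hx, Basis.constr_basis,
          Equiv.apply_symm_apply, Equiv.symm_apply_apply]
        rw [← hx, Equiv.symm_apply_apply]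
  · rintro (j | l)
    · simp [Equiv.apply_symm_apply]
    · rcases hx : φL l with j | l'
      · simp only [Sum.elim_inl, Sum.elim_inr, hx, Basis.constr_basis]
        rw [← hx, Equiv.symm_apply_apply]
      · simp only [Sum.elim_inl, Sum.elim_inr, hx, Basis.constr_basis,
          Equiv.apply_symm_apply, Equiv.symm_apply_apply]
        rw [← hx, Equiv.symm_apply_apply]
  · rintro (j | m)
    · simp only [Sum.elim_inl, Sum.elim_inr, map_neg, Basis.constr_basis,
        Equiv.apply_symm_apply, neg_neg]
    · rcases hx : φM m with j | m'
      · simp only [Sum.elim_inl, Sum.elim_inr, hx, map_sub, map_neg, Basis.constr_basis,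
          Equiv.apply_symm_apply]
        rw [← hx, Equiv.symm_apply_apply]
        abel
      · simp only [Sum.elim_inl, Sum.elim_inr, hx, map_neg, Basis.constr_basis,
          Equiv.apply_symm_apply, Equiv.symm_apply_apply, neg_neg]
        rw [← hx, Equiv.symm_apply_apply]
  · rintro (j | l)
    · simp only [Sum.elim_inl, Sum.elim_inr, map_sub, Basis.constr_basis,
        Equiv.apply_symm_apply]
      abel
    · rcases hx : φL l with j | l'
      · simp only [Sum.elim_inl, Sum.elim_inr, hx, map_neg, Basis.constr_basis]
        rw [← hx, Equiv.symm_apply_apply]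
        simp
      · simp only [Sum.elim_inl, Sum.elim_inr, hx, map_neg, Basis.constr_basis,
          Equiv.apply_symm_apply, Equiv.symm_apply_apply, neg_neg]
        rw [← hx, Equiv.symm_apply_apply]
end A2

section A1
variable {R V : Type*} [DivisionRing R] [AddCommGroup V] [Module R V]
variable {J L M : Type*}

/-- chain vectors through a point of `M` -/
noncomputable def A1xM (φ : J ≃ ((M × ℕ) ⊕ (L × ℕ)) ⊕ (J ⊕ J))
    (e : Basis (J ⊕ M) R V) (m : M) : ℕ → V
  | 0 => e (Sum.inr m)
  | (k+1) => e (Sum.inl (φ.symm (Sum.inl (Sum.inl (m, k)))))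

/-- chain vectors through a point of `L` -/
noncomputable def A1xL (φ : J ≃ ((M × ℕ) ⊕ (L × ℕ)) ⊕ (J ⊕ J))
    (e : Basis (J ⊕ M) R V) (l : L) (k : ℕ) : V :=
  e (Sum.inl (φ.symm (Sum.inl (Sum.inr (l, k)))))

theorem sum2units_A1 (T : Module.End R V)
    (b : Basis (J ⊕ L) R V) (e : Basis (J ⊕ M) R V)
    (φ : J ≃ ((M × ℕ) ⊕ (L × ℕ)) ⊕ (J ⊕ J))
    (htj : ∀ j, T (b (Sum.inl j)) = e (Sum.inl j))
    (htl : ∀ l, T (b (Sum.inr l)) = 0) :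
    ∃ S₁ S₂ : Module.End R V, IsUnit S₁ ∧ IsUnit S₂ ∧ T = S₁ + S₂ := by
  classical
  apply sum2units_master T b e
    -- y
    (fun i => Sum.elim
      (fun j => Sum.elim
        (Sum.elim
          (fun p => if p.2 % 2 = 0 then A1xM φ e p.1 p.2
            else A1xM φ e p.1 (p.2+1) - A1xM φ e p.1 p.2)
          (fun q => A1xL φ e q.1 (q.2+1)))
        (Sum.elim
          (fun j' => e (Sum.inl (φ.symm (Sum.inr (Sum.inr j')))))
          (fun j' => e (Sum.inl (φ.symm (Sum.inr (Sum.inl j'))))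
            + e (Sum.inl (φ.symm (Sum.inr (Sum.inr j'))))))
        (φ j))
      (fun l => A1xL φ e l 0) i)
    -- z
    (fun i => Sum.elim
      (fun j => Sum.elim
        (Sum.elim
          (fun p => if p.2 % 2 = 0 then A1xM φ e p.1 (p.2+1) - A1xM φ e p.1 p.2
            else A1xM φ e p.1 p.2)
          (fun q => A1xL φ e q.1 q.2 - A1xL φ e q.1 (q.2+1)))
        (Sum.elim
          (fun j' => e (Sum.inl (φ.symm (Sum.inr (Sum.inl j'))))
            - e (Sum.inl (φ.symm (Sum.inr (Sum.inr j')))))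
          (fun j' => -e (Sum.inl (φ.symm (Sum.inr (Sum.inl j'))))))
        (φ j))
      (fun l => -A1xL φ e l 0) i)
    -- w1
    (fun a => Sum.elim
      (fun j => Sum.elim
        (Sum.elim
          (fun p => if p.2 % 2 = 0
            then b (Sum.inl (φ.symm (Sum.inl (Sum.inl (p.1, p.2+2)))))
              - b (Sum.inl (φ.symm (Sum.inl (Sum.inl (p.1, p.2+1)))))
            else b (Sum.inl (φ.symm (Sum.inl (Sum.inl (p.1, p.2+1))))))
          (fun q => if q.2 = 0 then b (Sum.inr q.1)
            else b (Sum.inl (φ.symm (Sum.inl (Sum.inr (q.1, q.2 - 1)))))))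
        (Sum.elim
          (fun j' => b (Sum.inl (φ.symm (Sum.inr (Sum.inr j'))))
            - b (Sum.inl (φ.symm (Sum.inr (Sum.inl j')))))
          (fun j' => b (Sum.inl (φ.symm (Sum.inr (Sum.inl j'))))))
        (φ j))
      (fun m => b (Sum.inl (φ.symm (Sum.inl (Sum.inl (m, 0)))))) a)
    -- w2
    (fun a => Sum.elim
      (fun j => Sum.elim
        (Sum.elim
          (fun p => if p.2 % 2 = 0
            then b (Sum.inl (φ.symm (Sum.inl (Sum.inl (p.1, p.2+1)))))
            else b (Sum.inl (φ.symm (Sum.inl (Sum.inl (p.1, p.2+2)))))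
              - b (Sum.inl (φ.symm (Sum.inl (Sum.inl (p.1, p.2+1))))))
          (fun q => -b (Sum.inr q.1)
            - ∑ p ∈ Finset.range q.2, b (Sum.inl (φ.symm (Sum.inl (Sum.inr (q.1, p)))))))
        (Sum.elim
          (fun j' => -b (Sum.inl (φ.symm (Sum.inr (Sum.inr j')))))
          (fun j' => -b (Sum.inl (φ.symm (Sum.inr (Sum.inr j'))))
            - b (Sum.inl (φ.symm (Sum.inr (Sum.inl j'))))))
        (φ j))
      (fun m => b (Sum.inl (φ.symm (Sum.inl (Sum.inl (m, 1)))))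
        - b (Sum.inl (φ.symm (Sum.inl (Sum.inl (m, 0)))))) a)
  · -- hsum
    rintro (j | l)
    · rw [htj j]
      rcases hφ : φ j with ((⟨m,k⟩ | ⟨l,k⟩) | (j' | j')) <;>
        obtain rfl := φ.eq_symm_apply.mpr hφ <;>
        simp only [Sum.elim_inl, Sum.elim_inr, Equiv.apply_symm_apply]
      · by_cases hk : k % 2 = 0 <;>
          simp only [if_pos, if_neg, hk, if_true, if_false, A1xM] <;> abel
      · simp only [A1xL]
        abel
      · abel
      · abel
    · rw [htl l]
      simp only [Sum.elim_inr]
      abel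
  · -- h11
    rintro (j | m)
    · rcases hφ : φ j with ((⟨m,k⟩ | ⟨l,k⟩) | (j' | j')) <;>
        obtain rfl := φ.eq_symm_apply.mpr hφ <;>
        simp only [Sum.elim_inl, Sum.elim_inr, Equiv.apply_symm_apply]
      · by_cases hk : k % 2 = 0
        · rw [if_pos hk, map_sub, Basis.constr_basis, Basis.constr_basis]
          simp only [Sum.elim_inl, Equiv.apply_symm_apply]
          rw [if_pos (by omega : (k+2) % 2 = 0), if_neg (by omega : ¬ (k+1) % 2 = 0)]
          simp only [A1xM]
          abel
        · rw [if_neg hk, Basis.constr_basis]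
          simp only [Sum.elim_inl, Equiv.apply_symm_apply]
          rw [if_pos (by omega : (k+1) % 2 = 0)]
          simp only [A1xM]
      · rcases k with _ | p
        · rw [if_pos rfl, Basis.constr_basis]
          simp only [Sum.elim_inl, Sum.elim_inr, Equiv.apply_symm_apply, A1xL]
        · rw [if_neg (by omega : ¬ p + 1 = 0), Nat.add_sub_cancel, Basis.constr_basis]
          simp only [Sum.elim_inl, Sum.elim_inr, Equiv.apply_symm_apply, A1xL]
      · rw [map_sub, Basis.constr_basis, Basis.constr_basis]
        simp only [Sum.elim_inl, Sum.elim_inr, Equiv.apply_symm_apply]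
        abel
      · rw [Basis.constr_basis]
        simp only [Sum.elim_inl, Sum.elim_inr, Equiv.apply_symm_apply]
    · rw [Sum.elim_inr, Basis.constr_basis]
      simp only [Sum.elim_inl, Equiv.apply_symm_apply]
      simp [A1xM]
  · -- h12
    rintro (j | l)
    · rcases hφ : φ j with ((⟨m,k⟩ | ⟨l,k⟩) | (j' | j')) <;>
        obtain rfl := φ.eq_symm_apply.mpr hφ <;>
        simp only [Sum.elim_inl, Sum.elim_inr, Equiv.apply_symm_apply]
      · by_cases hk : k % 2 = 0
        · rw [if_pos hk]
          rcases k with _ | p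
          · simp only [A1xM]
            rw [Basis.constr_basis]
            simp only [Sum.elim_inr]
          · simp only [A1xM]
            rw [Basis.constr_basis]
            simp only [Sum.elim_inl, Equiv.apply_symm_apply]
            rw [if_neg (by omega : ¬ p % 2 = 0)]
        · rw [if_neg hk]
          rcases k with _ | p
          · omega
          · simp only [A1xM]
            rw [map_sub, Basis.constr_basis, Basis.constr_basis]
            simp only [Sum.elim_inl, Equiv.apply_symm_apply]
            rw [if_neg (by omega : ¬ (p+1) % 2 = 0), if_pos (by omega : p % 2 = 0)]
            abel
      · simp only [A1xL]
        rw [Basis.constr_basis]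
        simp only [Sum.elim_inl, Sum.elim_inr, Equiv.apply_symm_apply]
        rw [if_neg (by omega : ¬ k + 1 = 0), Nat.add_sub_cancel]
      · rw [Basis.constr_basis]
        simp only [Sum.elim_inl, Sum.elim_inr, Equiv.apply_symm_apply]
      · rw [map_add, Basis.constr_basis, Basis.constr_basis]
        simp only [Sum.elim_inl, Sum.elim_inr, Equiv.apply_symm_apply]
        abel
    · simp only [Sum.elim_inr, A1xL]
      rw [Basis.constr_basis]
      simp only [Sum.elim_inl, Sum.elim_inr, Equiv.apply_symm_apply]
      norm_num
  · -- h21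
    rintro (j | m)
    · rcases hφ : φ j with ((⟨m,k⟩ | ⟨l,k⟩) | (j' | j')) <;>
        obtain rfl := φ.eq_symm_apply.mpr hφ <;>
        simp only [Sum.elim_inl, Sum.elim_inr, Equiv.apply_symm_apply]
      · by_cases hk : k % 2 = 0
        · rw [if_pos hk, Basis.constr_basis]
          simp only [Sum.elim_inl, Equiv.apply_symm_apply]
          rw [if_neg (by omega : ¬ (k+1) % 2 = 0)]
          simp only [A1xM]
        · rw [if_neg hk, map_sub, Basis.constr_basis, Basis.constr_basis]
          simp only [Sum.elim_inl, Equiv.apply_symm_apply]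
          rw [if_neg (by omega : ¬ (k+2) % 2 = 0), if_pos (by omega : (k+1) % 2 = 0)]
          simp only [A1xM]
          abel
      · rw [map_sub, map_neg, map_sum, Basis.constr_basis]
        simp only [Sum.elim_inr, Sum.elim_inl, Basis.constr_basis, Equiv.apply_symm_apply]
        rw [Finset.sum_range_sub' (fun p => A1xL φ e l p)]
        simp only [A1xL]
        abel
      · rw [map_neg, Basis.constr_basis]
        simp only [Sum.elim_inl, Sum.elim_inr, Equiv.apply_symm_apply]
        abel
      · rw [map_sub, map_neg, Basis.constr_basis, Basis.constr_basis]
        simp only [Sum.elim_inl, Sum.elim_inr, Equiv.apply_symm_apply]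
        abel
    · rw [Sum.elim_inr, map_sub, Basis.constr_basis, Basis.constr_basis]
      simp only [Sum.elim_inl, Equiv.apply_symm_apply]
      norm_num
      rfl
  · -- h22
    rintro (j | l)
    · rcases hφ : φ j with ((⟨m,k⟩ | ⟨l,k⟩) | (j' | j')) <;>
        obtain rfl := φ.eq_symm_apply.mpr hφ <;>
        simp only [Sum.elim_inl, Sum.elim_inr, Equiv.apply_symm_apply]
      · by_cases hk : k % 2 = 0
        · rw [if_pos hk]
          rcases k with _ | p
          · simp only [A1xM]
            rw [map_sub, Basis.constr_basis, Basis.constr_basis]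
            simp only [Sum.elim_inl, Sum.elim_inr, Equiv.apply_symm_apply]
            norm_num
          · simp only [A1xM]
            rw [map_sub, Basis.constr_basis, Basis.constr_basis]
            simp only [Sum.elim_inl, Equiv.apply_symm_apply]
            rw [if_pos hk, if_neg (by omega : ¬ p % 2 = 0)]
            simp only [show p+1+1 = p+2 from rfl]
            abel
        · rw [if_neg hk]
          rcases k with _ | p
          · omega
          · simp only [A1xM]
            rw [Basis.constr_basis]
            simp only [Sum.elim_inl, Equiv.apply_symm_apply]
            rw [if_pos (by omega : p % 2 = 0)]
      · simp only [A1xL]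
        rw [map_sub, Basis.constr_basis, Basis.constr_basis]
        simp only [Sum.elim_inl, Sum.elim_inr, Equiv.apply_symm_apply]
        rw [Finset.sum_range_succ]
        abel
      · rw [map_sub, Basis.constr_basis, Basis.constr_basis]
        simp only [Sum.elim_inl, Sum.elim_inr, Equiv.apply_symm_apply]
        abel
      · rw [map_neg, Basis.constr_basis]
        simp only [Sum.elim_inl, Sum.elim_inr, Equiv.apply_symm_apply]
        abel
    · simp only [Sum.elim_inr, A1xL]
      rw [map_neg, Basis.constr_basis]
      simp only [Sum.elim_inl, Sum.elim_inr, Equiv.apply_symm_apply]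
      rw [Finset.sum_range_zero]
      abel
end A1

section Helpers
variable {R V : Type*} [DivisionRing R] [AddCommGroup V] [Module R V]

/-- finite-dimensional wrapper -/
theorem sum2units_finite {n r : ℕ} (T : Module.End R V)
    (b e : Basis (Fin n) R V)
    (ht : ∀ k : Fin n, T (b k) = if (k : ℕ) < r then e k else 0)
    (hT0 : T ≠ 0)
    (hone : n = 1 → ∃ c : R, c ≠ 0 ∧ 1 - c ≠ 0) :
    ∃ S₁ S₂ : Module.End R V, IsUnit S₁ ∧ IsUnit S₂ ∧ T = S₁ + S₂ := by
  rcases n with _ | m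
  · exact absurd (b.ext fun i => i.elim0) hT0
  by_cases hrn : r < m + 1
  · exact sum2units_cyclic hrn T b e ht
  have ht' : ∀ k, T (b k) = e k := fun k => by
    rw [ht k, if_pos (by have := k.isLt; omega)]
  rcases Nat.eq_zero_or_pos m with hm | hm
  · subst hm
    obtain ⟨c, hc0, hc1⟩ := hone rfl
    have h0 : ∀ k : Fin 1, k = 0 := fun k => Subsingleton.elim _ _
    exact sum2units_rank1 T b e (ht' 0) c hc0 hc1
  · exact sum2units_staircase hm T b e ht'

theorem exists_ne01 {D : Type*} [DivisionRing D]
    (hD : ¬ Nonempty (D ≃+* ZMod 2)) : ∃ c : Dᵐᵒᵖ, c ≠ 0 ∧ 1 - c ≠ 0 := by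
  classical
  have key : ∃ a : D, a ≠ 0 ∧ a ≠ 1 := by
    by_contra h'
    push_neg at h'
    have hall : ∀ a : D, a = 0 ∨ a = 1 := by
      intro a
      by_cases ha : a = 0
      · exact Or.inl ha
      · exact Or.inr (h' a ha)
    have h2 : (1 + 1 : D) = 0 := by
      rcases hall (1 + 1) with hc | hc
      · exact hc
      · exact absurd (add_eq_left.mp hc) one_ne_zero
    refine hD ⟨{ toFun := fun a => if a = 0 then 0 else 1
                 invFun := fun x => if x = 0 then 0 else 1
                 left_inv := ?_
                 right_inv := ?_
                 map_mul' := ?_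
                 map_add' := ?_ }⟩
    · intro a
      rcases hall a with rfl | rfl
      · simp
      · simp [one_ne_zero]
    · intro x
      have hZ : ∀ x : ZMod 2, x = 0 ∨ x = 1 := by decide
      rcases hZ x with rfl | rfl
      · simp
      · simp [one_ne_zero]
    · intro a b
      rcases hall a with rfl | rfl <;> rcases hall b with rfl | rfl <;>
        simp [one_ne_zero]
    · intro a b
      rcases hall a with rfl | rfl <;> rcases hall b with rfl | rfl <;>
        simp [one_ne_zero, h2] <;> decide
  obtain ⟨a, ha0, ha1⟩ := key
  refine ⟨MulOpposite.op a, by simpa using ha0, ?_⟩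
  rw [show (1 : Dᵐᵒᵖ) = MulOpposite.op 1 from rfl, ← MulOpposite.op_sub]
  intro hc
  rw [MulOpposite.op_eq_zero_iff, sub_eq_zero] at hc
  exact ha1 hc.symm
end Helpers

/-- Let `V` be a right vector space over a division ring `D` such that it is not
the case that `V` is one-dimensional with `D ≅ ℤ/2ℤ`. Then every linear
transformation of `V` is the sum of two invertible linear transformations. -/
theorem linearMap_sum_of_two_units (D : Type*) [DivisionRing D] (V : Type*)
    [AddCommGroup V] [Module Dᵐᵒᵖ V]
    (h : ¬(Module.rank Dᵐᵒᵖ V = 1 ∧ Nonempty (D ≃+* ZMod 2))) :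
    ∀ T : Module.End Dᵐᵒᵖ V, ∃ S₁ S₂ : Module.End Dᵐᵒᵖ V,
      IsUnit S₁ ∧ IsUnit S₂ ∧ T = S₁ + S₂ := by
  classical
  intro T
  by_cases hT0 : T = 0
  · exact ⟨1, -1, isUnit_one, isUnit_one.neg, by simp [hT0]⟩
  -- set up adapted bases
  obtain ⟨W, hW⟩ := Submodule.exists_isCompl (LinearMap.ker T)
  set J := Basis.ofVectorSpaceIndex Dᵐᵒᵖ W with hJdef
  set L := Basis.ofVectorSpaceIndex Dᵐᵒᵖ (LinearMap.ker T) with hLdef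
  let bW : Basis J Dᵐᵒᵖ W := Basis.ofVectorSpace Dᵐᵒᵖ W
  let bK : Basis L Dᵐᵒᵖ (LinearMap.ker T) := Basis.ofVectorSpace Dᵐᵒᵖ (LinearMap.ker T)
  let b0 : Basis (J ⊕ L) Dᵐᵒᵖ V :=
    (bW.prod bK).map (Submodule.prodEquivOfIsCompl _ _ hW.symm)
  have hb0l : ∀ j : J, b0 (Sum.inl j) = (bW j : V) := by
    intro j
    show (Submodule.prodEquivOfIsCompl _ _ hW.symm) ((bW.prod bK) (Sum.inl j)) = _
    rw [show ((bW.prod bK) (Sum.inl j)) = (bW j, 0) from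
      Prod.ext (bW.prod_apply_inl_fst bK j) (bW.prod_apply_inl_snd bK j)]
    rw [Submodule.coe_prodEquivOfIsCompl']
    simp
  have hb0r : ∀ l : L, b0 (Sum.inr l) = ((bK l : LinearMap.ker T) : V) := by
    intro l
    show (Submodule.prodEquivOfIsCompl _ _ hW.symm) ((bW.prod bK) (Sum.inr l)) = _
    rw [show ((bW.prod bK) (Sum.inr l)) = (0, bK l) from
      Prod.ext (bW.prod_apply_inr_fst bK l) (bW.prod_apply_inr_snd bK l)]
    rw [Submodule.coe_prodEquivOfIsCompl']
    simp
  have htl : ∀ l : L, T (b0 (Sum.inr l)) = 0 := by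
    intro l
    rw [hb0r l]
    exact LinearMap.mem_ker.mp (bK l).2
  -- range side
  set g : W →ₗ[Dᵐᵒᵖ] V := T ∘ₗ W.subtype with hgdef
  have hginj : Function.Injective g := by
    rw [← LinearMap.ker_eq_bot]
    rw [Submodule.eq_bot_iff]
    rintro ⟨x, hxW⟩ hx
    have hxk : x ∈ LinearMap.ker T := LinearMap.mem_ker.mpr hx
    have := Submodule.disjoint_def.mp hW.disjoint x hxk hxW
    simp [this]
  have hrange : LinearMap.range g = LinearMap.range T := by
    apply le_antisymm
    · rintro v ⟨w, rfl⟩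
      exact ⟨w, rfl⟩
    · rintro v ⟨u, rfl⟩
      obtain ⟨k, w, hk, hw, rfl⟩ := Submodule.codisjoint_iff_exists_add_eq.mp hW.codisjoint u
      refine ⟨⟨w, hw⟩, ?_⟩
      show T w = T (k + w)
      rw [map_add, LinearMap.mem_ker.mp hk, zero_add]
  obtain ⟨C, hC⟩ := Submodule.exists_isCompl (LinearMap.range T)
  set M := Basis.ofVectorSpaceIndex Dᵐᵒᵖ C with hMdef
  let bC : Basis M Dᵐᵒᵖ C := Basis.ofVectorSpace Dᵐᵒᵖ C
  let bR : Basis J Dᵐᵒᵖ (LinearMap.range T) :=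
    (bW.map (LinearEquiv.ofInjective g hginj)).map (LinearEquiv.ofEq _ _ hrange)
  let e0 : Basis (J ⊕ M) Dᵐᵒᵖ V :=
    (bR.prod bC).map (Submodule.prodEquivOfIsCompl _ _ hC)
  have htj : ∀ j : J, T (b0 (Sum.inl j)) = e0 (Sum.inl j) := by
    intro j
    have he : e0 (Sum.inl j) = ((bR j : LinearMap.range T) : V) := by
      show (Submodule.prodEquivOfIsCompl _ _ hC) ((bR.prod bC) (Sum.inl j)) = _
      rw [show ((bR.prod bC) (Sum.inl j)) = (bR j, 0) from
        Prod.ext (bR.prod_apply_inl_fst bC j) (bR.prod_apply_inl_snd bC j)]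
      rw [Submodule.coe_prodEquivOfIsCompl']
      simp
    rw [he, hb0l j]
    show T (bW j : W) = _
    simp only [bR, Basis.map_apply, LinearEquiv.coe_ofEq_apply, LinearEquiv.ofInjective_apply]
    rfl
  clear_value b0 e0
  -- dispatch on cardinality
  by_cases hfin : Finite (J ⊕ L)
  · -- finite case
    have : Finite J := Finite.of_injective (Sum.inl : J → J ⊕ L) Sum.inl_injective
    have : Finite L := Finite.of_injective (Sum.inr : L → J ⊕ L) Sum.inr_injective
    have hfM : Finite (J ⊕ M) := by
      have hmk := Cardinal.lift_inj.mp (mk_eq_mk_of_basis b0 e0)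
      rw [← Cardinal.lt_aleph0_iff_finite] at hfin ⊢
      rwa [← hmk]
    have : Finite M := Finite.of_injective (Sum.inr : M → J ⊕ M) Sum.inr_injective
    have := Fintype.ofFinite J
    have := Fintype.ofFinite L
    have := Fintype.ofFinite M
    have hcards : Fintype.card L = Fintype.card M := by
      have hmk := Cardinal.lift_inj.mp (mk_eq_mk_of_basis b0 e0)
      rw [Cardinal.mk_fintype, Cardinal.mk_fintype, Nat.cast_inj,
        Fintype.card_sum, Fintype.card_sum] at hmk
      omega
    set r := Fintype.card J with hrdef
    set s := Fintype.card L with hsdef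
    let eJ : J ≃ Fin r := Fintype.equivFin J
    let eL : L ≃ Fin s := Fintype.equivFin L
    let eM : M ≃ Fin s := Fintype.equivFinOfCardEq hcards.symm
    let ΦI : (J ⊕ L) ≃ Fin (r + s) := (eJ.sumCongr eL).trans finSumFinEquiv
    let ΦA : (J ⊕ M) ≃ Fin (r + s) := (eJ.sumCongr eM).trans finSumFinEquiv
    let b1 := b0.reindex ΦI
    let e1 := e0.reindex ΦA
    have ht : ∀ k : Fin (r + s), T (b1 k) = if (k : ℕ) < r then e1 k else 0 := by
      intro k
      obtain ⟨i, rfl⟩ := ΦI.surjective k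
      rw [show b1 (ΦI i) = b0 i from by simp [b1, Basis.reindex_apply]]
      rcases i with j | l
      · have hk : (ΦI (Sum.inl j) : ℕ) < r := by
          simp only [ΦI, Equiv.trans_apply, Equiv.sumCongr_apply, Sum.map_inl]
          simp [finSumFinEquiv]
        rw [if_pos hk, htj j]
        have : ΦA.symm (ΦI (Sum.inl j)) = Sum.inl j := by
          simp only [ΦI, ΦA, Equiv.trans_apply, Equiv.sumCongr_apply, Sum.map_inl,
            Equiv.symm_trans_apply, Equiv.sumCongr_symm, finSumFinEquiv_apply_left,
            finSumFinEquiv_symm_apply_castAdd]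
          simp
        rw [show e1 (ΦI (Sum.inl j)) = e0 (ΦA.symm (ΦI (Sum.inl j))) from by
          simp [e1, Basis.reindex_apply], this]
      · have hk : ¬ ((ΦI (Sum.inr l) : ℕ) < r) := by
          simp only [ΦI, Equiv.trans_apply, Equiv.sumCongr_apply, Sum.map_inr]
          simp [finSumFinEquiv]
        rw [if_neg hk, htl l]
    apply sum2units_finite T b1 e1 ht hT0
    intro hn1
    have hrank : Module.rank Dᵐᵒᵖ V = 1 := by
      rw [rank_eq_card_basis b1, hn1]
      simp
    have hD : ¬ Nonempty (D ≃+* ZMod 2) := fun hne => h ⟨hrank, hne⟩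
    exact exists_ne01 hD
  · -- infinite case
    rw [not_finite_iff_infinite] at hfin
    have hmk : (Cardinal.mk ↑J + Cardinal.mk ↑L) = (Cardinal.mk ↑J + Cardinal.mk ↑M) := by
      have hmk0 := Cardinal.lift_inj.mp (mk_eq_mk_of_basis b0 e0)
      rw [Cardinal.mk_sum, Cardinal.mk_sum] at hmk0
      simp only [Cardinal.lift_id] at hmk0
      exact hmk0
    have hIinf : Cardinal.aleph0 ≤ Cardinal.mk ↑J + Cardinal.mk ↑L := by
      rw [Cardinal.infinite_iff, Cardinal.mk_sum] at hfin
      simpa only [Cardinal.lift_id] using hfin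
    by_cases hA1 : Cardinal.mk L ≤ Cardinal.mk J ∧ Cardinal.mk M ≤ Cardinal.mk J
    · -- A1
      obtain ⟨hL, hM⟩ := hA1
      have hJinf : Cardinal.aleph0 ≤ Cardinal.mk ↑J := by
        by_contra hc
        push_neg at hc
        have := Cardinal.add_lt_aleph0 hc (lt_of_le_of_lt hL hc)
        exact absurd hIinf (not_le.mpr this)
      have hcard : Cardinal.mk J =
          Cardinal.mk ((((M × ℕ) ⊕ (L × ℕ)) ⊕ (J ⊕ J) : Type _)) := by
        rw [Cardinal.mk_sum, Cardinal.mk_sum, Cardinal.mk_sum, Cardinal.mk_prod,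
          Cardinal.mk_prod]
        simp only [Cardinal.lift_id', Cardinal.lift_id, Cardinal.mk_nat, Cardinal.lift_aleph0]
        have h1 : Cardinal.mk M * Cardinal.aleph0 ≤ Cardinal.mk J := by
          calc Cardinal.mk M * Cardinal.aleph0 ≤ Cardinal.mk J * Cardinal.mk J :=
                mul_le_mul' hM hJinf
          _ = Cardinal.mk J := Cardinal.mul_eq_self hJinf
        have h2 : Cardinal.mk L * Cardinal.aleph0 ≤ Cardinal.mk J := by
          calc Cardinal.mk L * Cardinal.aleph0 ≤ Cardinal.mk J * Cardinal.mk J :=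
                mul_le_mul' hL hJinf
          _ = Cardinal.mk J := Cardinal.mul_eq_self hJinf
        rw [Cardinal.add_eq_self hJinf]
        rw [Cardinal.add_eq_right hJinf (le_trans (add_le_add h1 h2)
          (le_of_eq (Cardinal.add_eq_self hJinf)))]
      obtain ⟨φ⟩ := Cardinal.eq.mp hcard
      exact sum2units_A1 T b0 e0 φ htj htl
    · -- A2
      push_neg at hA1
      have hJL : Cardinal.mk ↑J < Cardinal.mk ↑L := by
        by_contra hc
        push_neg at hc
        have hJM : Cardinal.mk ↑J < Cardinal.mk ↑M := hA1 hc
        rcases lt_or_ge (Cardinal.mk ↑J) Cardinal.aleph0 with hJf | hJi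
        · have : Cardinal.mk ↑J + Cardinal.mk ↑L < Cardinal.aleph0 :=
            Cardinal.add_lt_aleph0 hJf (lt_of_le_of_lt hc hJf)
          exact absurd hIinf (not_le.mpr this)
        · have h1 : Cardinal.mk ↑J + Cardinal.mk ↑L = Cardinal.mk ↑J :=
            Cardinal.add_eq_left hJi hc
          have h2 : Cardinal.mk ↑J < Cardinal.mk ↑J + Cardinal.mk ↑M :=
            lt_of_lt_of_le hJM le_add_self
          rw [← hmk, h1] at h2
          exact lt_irrefl _ h2
      have hLinf : Cardinal.aleph0 ≤ Cardinal.mk ↑L := by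
        rcases lt_or_ge (Cardinal.mk ↑L) Cardinal.aleph0 with hLf | hLi
        · have : Cardinal.mk ↑J + Cardinal.mk ↑L < Cardinal.aleph0 :=
            Cardinal.add_lt_aleph0 (hJL.trans hLf) hLf
          exact absurd hIinf (not_le.mpr this)
        · exact hLi
      have hJLe : Cardinal.mk ↑J ≤ Cardinal.mk ↑L := hJL.le
      have hL_eq : Cardinal.mk ↑J + Cardinal.mk ↑L = Cardinal.mk ↑L :=
        Cardinal.add_eq_right hLinf hJLe
      have hLJM : Cardinal.mk ↑L = Cardinal.mk ↑J + Cardinal.mk ↑M :=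
        hL_eq.symm.trans hmk
      have hMinf : Cardinal.aleph0 ≤ Cardinal.mk ↑M := by
        by_contra hc
        push_neg at hc
        rcases lt_or_ge (Cardinal.mk ↑J) Cardinal.aleph0 with hJf | hJi
        · have : Cardinal.mk ↑J + Cardinal.mk ↑M < Cardinal.aleph0 :=
            Cardinal.add_lt_aleph0 hJf hc
          rw [← hLJM] at this
          exact absurd hLinf (not_le.mpr this)
        · have hx : Cardinal.mk ↑J + Cardinal.mk ↑M = Cardinal.mk ↑J :=
            Cardinal.add_eq_left hJi ((le_of_lt hc).trans hJi)
          rw [hx] at hLJM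
          rw [hLJM] at hJL
          exact lt_irrefl _ hJL
      have hLM : Cardinal.mk ↑L = Cardinal.mk ↑M := by
        have hmax := Cardinal.add_eq_max' hMinf (a := Cardinal.mk ↑J)
        rw [hmax] at hLJM
        rcases max_cases (Cardinal.mk ↑J) (Cardinal.mk ↑M) with ⟨hm1, _⟩ | ⟨hm1, _⟩
        · rw [hm1] at hLJM
          exact absurd hLJM (ne_of_gt hJL)
        · rw [hm1] at hLJM
          exact hLJM
      have hφL : Cardinal.mk ↑L = Cardinal.mk ((↑J ⊕ ↑L : Type _)) := by
        rw [Cardinal.mk_sum, Cardinal.lift_id, Cardinal.lift_id]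
        exact hL_eq.symm
      have hφM : Cardinal.mk ↑M = Cardinal.mk ((↑J ⊕ ↑M : Type _)) := by
        rw [Cardinal.mk_sum, Cardinal.lift_id, Cardinal.lift_id, ← hLM]
        exact hL_eq.symm
      obtain ⟨φL⟩ := Cardinal.eq.mp hφL
      obtain ⟨φM⟩ := Cardinal.eq.mp hφM
      obtain ⟨σ⟩ := Cardinal.eq.mp hLM
      exact sum2units_A2 T b0 e0 φL φM σ htj htl
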